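/- Suppose x : [0,a] → ℝ is differentiable on [0,a] (one-sidedly at the endpoints) with x(0) = x₀ and x'(t) = f(t, x(t)) for all t ∈ [0,a]. Then |x(t) − x₀| ≤ M·a for all t ∈ [0,a]; that is, (t, x(t)) ∈ U for all t ∈ [0,a]. -/
import Mathlib


open Filter Topology Set

/-- Any solution of the IVP on [0,a] satisfies |x(t) − x₀| ≤ M·a,
i.e. (t, x(t)) ∈ U for all t ∈ [0,a]. -/
theorem solution_stays_in_U
    (a M L x₀ : ℝ) (ha : 0 < a) (hM : 0 < M) (hL : 0 < L)
    (U : Set (ℝ × ℝ))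
    (hU : U = Set.Icc (0 : ℝ) a ×ˢ Set.Icc (x₀ - M * a) (x₀ + M * a))
    (f : ℝ × ℝ → ℝ)
    (hf_lip : ∀ u ∈ U, ∀ v ∈ U, |f u - f v| ≤ L * (|u.1 - v.1| + |u.2 - v.2|))
    (hf_bdd : ∀ u ∈ U, |f u| ≤ M)
    (x : ℝ → ℝ)
    (hx0 : x 0 = x₀)
    (hderiv : ∀ t ∈ Set.Icc (0 : ℝ) a,
      HasDerivWithinAt x (f (t, x t)) (Set.Icc (0 : ℝ) a) t) :
    ∀ t ∈ Set.Icc (0 : ℝ) a, |x t - x₀| ≤ M * a ∧ (t, x t) ∈ U := by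
  have hcont : ContinuousOn x (Set.Icc (0:ℝ) a) :=
    fun t ht => (hderiv t ht).continuousWithinAt
  have hMa : 0 < M * a := mul_pos hM ha
  -- membership in U from the bound
  have hmemU : ∀ t ∈ Set.Icc (0:ℝ) a, |x t - x₀| ≤ M * a → (t, x t) ∈ U := by
    intro t ht hb
    rw [hU]
    refine ⟨ht, ?_, ?_⟩ <;> [linarith [neg_le_of_abs_le hb]; linarith [le_of_abs_le hb]]
  -- main bound
  have hmain : ∀ t ∈ Set.Icc (0:ℝ) a, |x t - x₀| ≤ M * a := by
    by_contra hbad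
    push_neg at hbad
    obtain ⟨t₁, ht₁, ht₁bad⟩ := hbad
    set B : Set ℝ := Set.Icc (0:ℝ) a ∩ (fun t => |x t - x₀|) ⁻¹' Set.Ici (M * a) with hB
    have hBclosed : IsClosed B := by
      apply ContinuousOn.preimage_isClosed_of_isClosed
        ((hcont.sub continuousOn_const).abs) isClosed_Icc isClosed_Ici
    have hBne : B.Nonempty := ⟨t₁, ht₁, le_of_lt ht₁bad⟩
    have hBbdd : BddBelow B := ⟨0, fun s hs => hs.1.1⟩
    set τ := sInf B with hτ
    have hτB : τ ∈ B := hBclosed.csInf_mem hBne hBbdd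
    have hτIcc : τ ∈ Set.Icc (0:ℝ) a := hτB.1
    have hτge : M * a ≤ |x τ - x₀| := hτB.2
    have hτpos : 0 < τ := by
      rcases lt_or_eq_of_le hτIcc.1 with h | h
      · exact h
      · exfalso
        have : |x τ - x₀| = 0 := by rw [← h, hx0]; simp
        linarith
    -- points strictly before τ are not in B
    have hbefore : ∀ s, 0 ≤ s → s < τ → |x s - x₀| < M * a := by
      intro s hs0 hsτ
      by_contra h
      push_neg at h
      have : s ∈ B := ⟨⟨hs0, le_trans hsτ.le hτIcc.2⟩, h⟩
      exact absurd (csInf_le hBbdd this) (not_le.mpr hsτ)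
    -- mean value bound on [0, s] for s < τ
    have hmvt : ∀ s, 0 ≤ s → s < τ → |x s - x₀| ≤ M * s := by
      intro s hs0 hsτ
      have hsa : s ≤ a := le_trans hsτ.le hτIcc.2
      have hsub : Set.Icc (0:ℝ) s ⊆ Set.Icc (0:ℝ) a :=
        Set.Icc_subset_Icc le_rfl hsa
      have hbound : ∀ u ∈ Set.Icc (0:ℝ) s, ‖f (u, x u)‖ ≤ M := by
        intro u hu
        apply hf_bdd
        apply hmemU u (hsub hu)
        exact le_of_lt (hbefore u hu.1 (lt_of_le_of_lt hu.2 hsτ))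
      have := (convex_Icc (0:ℝ) s).norm_image_sub_le_of_norm_hasDerivWithin_le
        (fun u hu => (hderiv u (hsub hu)).mono hsub) hbound
        (Set.left_mem_Icc.mpr hs0) (Set.right_mem_Icc.mpr hs0)
      rw [hx0] at this
      calc |x s - x₀| = ‖x s - x₀‖ := rfl
        _ ≤ M * ‖s - 0‖ := this
        _ = M * s := by rw [sub_zero, Real.norm_eq_abs, abs_of_nonneg hs0]
    -- take the limit s → τ⁻ : |x τ - x₀| ≤ M * τ
    have hlim : |x τ - x₀| ≤ M * τ := by
      have hne : (𝓝[Set.Ico (0:ℝ) τ] τ).NeBot := by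
        apply mem_closure_iff_nhdsWithin_neBot.mp
        rw [closure_Ico (ne_of_lt hτpos)]
        exact Set.right_mem_Icc.mpr hτpos.le
      have hct : Tendsto (fun s => |x s - x₀|) (𝓝[Set.Ico (0:ℝ) τ] τ) (𝓝 (|x τ - x₀|)) := by
        have : ContinuousWithinAt (fun s => |x s - x₀|) (Set.Icc (0:ℝ) a) τ :=
          ((hcont.sub continuousOn_const).abs) τ hτIcc
        exact this.mono (Set.Ico_subset_Icc_self.trans (Set.Icc_subset_Icc le_rfl hτIcc.2))
      have hct2 : Tendsto (fun s => M * s) (𝓝[Set.Ico (0:ℝ) τ] τ) (𝓝 (M * τ)) :=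
        ((continuous_const.mul continuous_id).tendsto τ).mono_left nhdsWithin_le_nhds
      exact le_of_tendsto_of_tendsto hct hct2
        (Filter.eventually_inf_principal.mpr (Filter.Eventually.of_forall
          fun s hs => hmvt s hs.1 hs.2))
    have haτ : a ≤ τ := by
      have : M * a ≤ M * τ := le_trans hτge hlim
      exact le_of_mul_le_mul_left this hM
    have hτa : τ = a := le_antisymm hτIcc.2 haτ
    -- t₁ ∈ B so τ ≤ t₁, combined with t₁ ≤ a gives t₁ = τ
    have ht₁B : t₁ ∈ B := ⟨ht₁, ht₁bad.le⟩
    have : τ ≤ t₁ := csInf_le hBbdd ht₁B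
    have ht₁τ : t₁ = τ := le_antisymm (hτa ▸ ht₁.2) this
    rw [ht₁τ] at ht₁bad
    rw [hτa] at hlim ht₁bad
    linarith
  intro t ht
  exact ⟨hmain t ht, hmemU t ht (hmain t ht)⟩
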